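/- Along any solution of the Kowalevski equations in two constant fields, the complex-valued functions x₁,x₂,y₁,y₂,z₁,z₂,w₁,w₂,w₃ satisfy dx₁/dt = i(−x₁w₃ + z₁w₁), dx₂/dt = i(x₂w₃ − z₂w₂), dy₁/dt = i(−y₁w₃ + z₂w₁), dy₂/dt = i(y₂w₃ − z₁w₂), 2·dz₁/dt = i(x₁w₂ − y₂w₁), 2·dz₂/dt = i(−x₂w₁ + y₁w₂), 2·dw₁/dt = −i(w₁w₃ + z₁), 2·dw₂/dt = i(w₂w₃ + z₂), 2·dw₃/dt = i(y₂ − y₁). -/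

import Mathlib

/-- Along any solution of the Kowalevski equations in two constant fields, the complex
coordinates `x₁, x₂, y₁, y₂, z₁, z₂, w₁, w₂, w₃` satisfy the system (1.8) of the paper:
`dx₁/dt = i(-x₁w₃ + z₁w₁)`, etc. -/
theorem stmt_5
    (ω₁ ω₂ ω₃ α₁ α₂ α₃ β₁ β₂ β₃ : ℝ → ℝ)
    (hω₁ : ∀ t, HasDerivAt ω₁ ((ω₂ t * ω₃ t + β₃ t) / 2) t)
    (hω₂ : ∀ t, HasDerivAt ω₂ ((-(ω₁ t * ω₃ t) - α₃ t) / 2) t)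
    (hω₃ : ∀ t, HasDerivAt ω₃ (α₂ t - β₁ t) t)
    (hα₁ : ∀ t, HasDerivAt α₁ (α₂ t * ω₃ t - α₃ t * ω₂ t) t)
    (hα₂ : ∀ t, HasDerivAt α₂ (α₃ t * ω₁ t - α₁ t * ω₃ t) t)
    (hα₃ : ∀ t, HasDerivAt α₃ (α₁ t * ω₂ t - α₂ t * ω₁ t) t)
    (hβ₁ : ∀ t, HasDerivAt β₁ (β₂ t * ω₃ t - β₃ t * ω₂ t) t)
    (hβ₂ : ∀ t, HasDerivAt β₂ (β₃ t * ω₁ t - β₁ t * ω₃ t) t)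
    (hβ₃ : ∀ t, HasDerivAt β₃ (β₁ t * ω₂ t - β₂ t * ω₁ t) t)
    (x₁ x₂ y₁ y₂ z₁ z₂ w₁ w₂ w₃ : ℝ → ℂ)
    (hx₁ : x₁ = fun t => ((α₁ t - β₂ t : ℝ) : ℂ) + (α₂ t + β₁ t : ℝ) * Complex.I)
    (hx₂ : x₂ = fun t => ((α₁ t - β₂ t : ℝ) : ℂ) - (α₂ t + β₁ t : ℝ) * Complex.I)
    (hy₁ : y₁ = fun t => ((α₁ t + β₂ t : ℝ) : ℂ) + (α₂ t - β₁ t : ℝ) * Complex.I)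
    (hy₂ : y₂ = fun t => ((α₁ t + β₂ t : ℝ) : ℂ) - (α₂ t - β₁ t : ℝ) * Complex.I)
    (hz₁ : z₁ = fun t => ((α₃ t : ℝ) : ℂ) + (β₃ t : ℝ) * Complex.I)
    (hz₂ : z₂ = fun t => ((α₃ t : ℝ) : ℂ) - (β₃ t : ℝ) * Complex.I)
    (hw₁ : w₁ = fun t => ((ω₁ t : ℝ) : ℂ) + (ω₂ t : ℝ) * Complex.I)
    (hw₂ : w₂ = fun t => ((ω₁ t : ℝ) : ℂ) - (ω₂ t : ℝ) * Complex.I)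
    (hw₃ : w₃ = fun t => ((ω₃ t : ℝ) : ℂ)) :
    ∀ t : ℝ,
      HasDerivAt x₁ (Complex.I * (-(x₁ t * w₃ t) + z₁ t * w₁ t)) t ∧
      HasDerivAt x₂ (Complex.I * (x₂ t * w₃ t - z₂ t * w₂ t)) t ∧
      HasDerivAt y₁ (Complex.I * (-(y₁ t * w₃ t) + z₂ t * w₁ t)) t ∧
      HasDerivAt y₂ (Complex.I * (y₂ t * w₃ t - z₁ t * w₂ t)) t ∧
      HasDerivAt z₁ (Complex.I * (x₁ t * w₂ t - y₂ t * w₁ t) / 2) t ∧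
      HasDerivAt z₂ (Complex.I * (-(x₂ t * w₁ t) + y₁ t * w₂ t) / 2) t ∧
      HasDerivAt w₁ (-(Complex.I * (w₁ t * w₃ t + z₁ t)) / 2) t ∧
      HasDerivAt w₂ (Complex.I * (w₂ t * w₃ t + z₂ t) / 2) t ∧
      HasDerivAt w₃ (Complex.I * (y₂ t - y₁ t) / 2) t := by
  subst hx₁ hx₂ hy₁ hy₂ hz₁ hz₂ hw₁ hw₂ hw₃
  intro t
  refine ⟨?_, ?_, ?_, ?_, ?_, ?_, ?_, ?_, ?_⟩
  · have h := (((hα₁ t).sub (hβ₂ t)).ofReal_comp).add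
      ((((hα₂ t).add (hβ₁ t)).ofReal_comp).mul_const Complex.I)
    convert h using 1
    all_goals try rfl
    simp [Complex.ext_iff]
    constructor <;> ring
  · have h := (((hα₁ t).sub (hβ₂ t)).ofReal_comp).sub
      ((((hα₂ t).add (hβ₁ t)).ofReal_comp).mul_const Complex.I)
    convert h using 1
    all_goals try rfl
    simp [Complex.ext_iff]
    constructor <;> ring
  · have h := (((hα₁ t).add (hβ₂ t)).ofReal_comp).add
      ((((hα₂ t).sub (hβ₁ t)).ofReal_comp).mul_const Complex.I)
    convert h using 1
    all_goals try rfl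
    simp [Complex.ext_iff]
    constructor <;> ring
  · have h := (((hα₁ t).add (hβ₂ t)).ofReal_comp).sub
      ((((hα₂ t).sub (hβ₁ t)).ofReal_comp).mul_const Complex.I)
    convert h using 1
    all_goals try rfl
    simp [Complex.ext_iff]
    constructor <;> ring
  · have h := ((hα₃ t).ofReal_comp).add (((hβ₃ t).ofReal_comp).mul_const Complex.I)
    convert h using 1
    all_goals try rfl
    simp [Complex.ext_iff]
    constructor <;> ring
  · have h := ((hα₃ t).ofReal_comp).sub (((hβ₃ t).ofReal_comp).mul_const Complex.I)
    convert h using 1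
    all_goals try rfl
    simp [Complex.ext_iff]
    constructor <;> ring
  · have h := ((hω₁ t).ofReal_comp).add (((hω₂ t).ofReal_comp).mul_const Complex.I)
    convert h using 1
    all_goals try rfl
    simp [Complex.ext_iff]
    ring
  · have h := ((hω₁ t).ofReal_comp).sub (((hω₂ t).ofReal_comp).mul_const Complex.I)
    convert h using 1
    all_goals try rfl
    simp [Complex.ext_iff]
    constructor <;> ring
  · have h := (hω₃ t).ofReal_comp
    convert h using 1
    simp [Complex.ext_iff]
    ring
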